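/- For every bounded subset B of a metric space M, there exists a countable subset B₀ ⊆ B such that the Kuratowski measures of noncompactness coincide: α(B₀) = α(B). -/

import Mathlib

/-- The Kuratowski measure of noncompactness: the infimum of all `d > 0` such that `B`
can be covered by finitely many sets of diameter at most `d`. -/
noncomputable def kuratowski {M : Type*} [PseudoMetricSpace M] (B : Set M) : ℝ :=
  sInf {d : ℝ | 0 < d ∧ ∃ F : Finset (Set M),
    (B ⊆ ⋃ E ∈ F, E) ∧ ∀ E ∈ F, EMetric.diam E ≤ ENNReal.ofReal d}

namespace KurAux

variable {M : Type*} [MetricSpace M]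

/-- The defining set. -/
def covSet (B : Set M) : Set ℝ :=
  {d : ℝ | 0 < d ∧ ∃ F : Finset (Set M),
    (B ⊆ ⋃ E ∈ F, E) ∧ ∀ E ∈ F, EMetric.diam E ≤ ENNReal.ofReal d}

lemma kuratowski_eq (B : Set M) : kuratowski B = sInf (covSet B) := rfl

lemma covSet_bddBelow (B : Set M) : BddBelow (covSet B) :=
  ⟨0, fun d hd => hd.1.le⟩

lemma covSet_anti {B₀ B : Set M} (h : B₀ ⊆ B) : covSet B ⊆ covSet B₀ := by
  rintro d ⟨hd, F, hcov, hdiam⟩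
  exact ⟨hd, F, h.trans hcov, hdiam⟩

lemma covSet_nonempty {B : Set M} (hB : Bornology.IsBounded B) : (covSet B).Nonempty := by
  have h0 : (0 : ℝ) ≤ Metric.diam B := Metric.diam_nonneg
  refine ⟨Metric.diam B + 1, by positivity, {B}, ?_, ?_⟩
  · intro x hx; simp [hx]
  · intro E hE
    simp only [Finset.mem_singleton] at hE
    rw [hE]
    refine le_trans ?_ (ENNReal.ofReal_le_ofReal (by linarith : Metric.diam B ≤ Metric.diam B + 1))
    exact Metric.ediam_le_of_forall_dist_le fun x hx y hy => Metric.dist_le_diam_of_mem hB hx hy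

lemma covSet_upward {B : Set M} {d d' : ℝ} (hd : d ∈ covSet B) (hdd' : d ≤ d') :
    d' ∈ covSet B := by
  obtain ⟨h0, F, hcov, hdiam⟩ := hd
  exact ⟨h0.trans_le hdd', F, hcov,
    fun E hE => (hdiam E hE).trans (ENNReal.ofReal_le_ofReal hdd')⟩

/-- The "far" graph on a set `B` at scale `d`. -/
def farGraph (B : Set M) (d : ℝ) (hd : 0 < d) : SimpleGraph B where
  Adj x y := d < dist (x : M) y
  symm := by constructor; intro x y h; rwa [dist_comm]
  loopless := by constructor; intro x h; simp at h; linarith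

/-- From a proper coloring with finitely many colors, get a cover. -/
lemma cover_of_coloring {B : Set M} {d : ℝ} (hd : 0 < d) {N : ℕ}
    (f : farGraph B d hd →g (⊤ : SimpleGraph (Fin N))) :
    ∃ F : Finset (Set M), (B ⊆ ⋃ E ∈ F, E) ∧ ∀ E ∈ F, EMetric.diam E ≤ ENNReal.ofReal d := by
  classical
  refine ⟨Finset.image (fun i => Subtype.val '' (f ⁻¹' {i})) Finset.univ, ?_, ?_⟩
  · intro x hx
    refine Set.mem_iUnion₂.2 ⟨Subtype.val '' (f ⁻¹' {f ⟨x, hx⟩}), ?_, ⟨⟨x, hx⟩, rfl, rfl⟩⟩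
    exact Finset.mem_image.2 ⟨f ⟨x, hx⟩, Finset.mem_univ _, rfl⟩
  · intro E hE
    obtain ⟨i, _, rfl⟩ := Finset.mem_image.1 hE
    refine EMetric.diam_le ?_
    rintro x ⟨u, hu, rfl⟩ y ⟨v, hv, rfl⟩
    have h1 : f u = f v := by
      simp only [Set.mem_preimage, Set.mem_singleton_iff] at hu hv; rw [hu, hv]
    have hle : dist (u : M) v ≤ d := by
      by_contra hlt
      push_neg at hlt
      have hadj : (farGraph B d hd).Adj u v := hlt
      exact (f.map_adj hadj) h1
    rw [edist_dist]
    exact ENNReal.ofReal_le_ofReal hle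

/-- Countable reflection for a fixed scale `d`. -/
lemma reflect {B : Set M} {d : ℝ} (hd : 0 < d)
    (h : ∀ C ⊆ B, C.Countable → ∃ F : Finset (Set M),
      (C ⊆ ⋃ E ∈ F, E) ∧ ∀ E ∈ F, EMetric.diam E ≤ ENNReal.ofReal d) :
    ∃ F : Finset (Set M), (B ⊆ ⋃ E ∈ F, E) ∧ ∀ E ∈ F, EMetric.diam E ≤ ENNReal.ofReal d := by
  classical
  -- Step 1: a uniform bound on the number of pieces over countable subsets
  have huniform : ∃ N : ℕ, ∀ C ⊆ B, C.Countable → ∃ F : Finset (Set M), F.card ≤ N ∧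
      (C ⊆ ⋃ E ∈ F, E) ∧ ∀ E ∈ F, EMetric.diam E ≤ ENNReal.ofReal d := by
    by_contra hcon
    push_neg at hcon
    choose C hCB hCc hCn using hcon
    set D : Set M := ⋃ n, C n with hD
    have hDB : D ⊆ B := Set.iUnion_subset hCB
    have hDc : D.Countable := Set.countable_iUnion hCc
    obtain ⟨F, hcov, hdiam⟩ := h D hDB hDc
    obtain ⟨E, hEF, hEd⟩ := hCn F.card F le_rfl ((Set.subset_iUnion C F.card).trans hcov)
    exact absurd (hdiam E hEF) (not_le.mpr hEd)
  obtain ⟨N, hN⟩ := huniform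
  -- Step 2: every finite subgraph of the far graph is N-colorable
  have hfin : ∀ G' : (farGraph B d hd).Subgraph, G'.verts.Finite →
      Nonempty (G'.coe →g (⊤ : SimpleGraph (Fin N))) := by
    intro G' hfinV
    have hCB : (Subtype.val '' G'.verts : Set M) ⊆ B := by
      rintro x ⟨u, _, rfl⟩; exact u.2
    obtain ⟨F, hcard, hcov, hdiam⟩ :=
      hN _ hCB (hfinV.image Subtype.val).countable
    have hsel : ∀ v : G'.verts, ∃ E ∈ F, ((v : B) : M) ∈ E := by
      intro v
      have : ((v : B) : M) ∈ ⋃ E ∈ F, E := hcov ⟨v, v.2, rfl⟩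
      simpa using this
    choose E hEF hEmem using hsel
    obtain ⟨emb⟩ : Nonempty ({x // x ∈ F} ↪ Fin N) := by
      apply Function.Embedding.nonempty_of_card_le
      simpa using hcard
    refine ⟨⟨fun v => emb ⟨E v, hEF v⟩, ?_⟩⟩
    intro a b hadj
    simp only [SimpleGraph.top_adj, ne_eq]
    intro heq
    have hEE : E a = E b := by
      have := emb.injective heq
      exact Subtype.ext_iff.1 this
    have hdistle : dist ((a : B) : M) ((b : B) : M) ≤ d := by
      have h1 : edist ((a : B) : M) ((b : B) : M) ≤ ENNReal.ofReal d := by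
        refine le_trans ?_ (hdiam (E a) (hEF a))
        exact EMetric.edist_le_diam_of_mem (hEmem a) (hEE ▸ hEmem b)
      rw [edist_dist] at h1
      exact (ENNReal.ofReal_le_ofReal_iff hd.le).1 h1
    have hadj' : (farGraph B d hd).Adj a b := G'.adj_sub hadj
    exact absurd hdistle (not_le.2 hadj')
  obtain ⟨f⟩ := SimpleGraph.nonempty_hom_of_forall_finite_subgraph_hom
    (fun G' hG' => (hfin G' hG').some)
  exact cover_of_coloring hd f

end KurAux

/-- Main theorem: countable determination of the Kuratowski measure of noncompactness.
Every bounded subset of a metric space contains a countable subset with the same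
Kuratowski measure. -/
theorem stmt19 {M : Type*} [MetricSpace M] (B : Set M) (hB : Bornology.IsBounded B) :
    ∃ B₀ : Set M, B₀ ⊆ B ∧ B₀.Countable ∧ kuratowski B₀ = kuratowski B := by
  classical
  open KurAux in
  set a := kuratowski B with ha
  have hne : (covSet B).Nonempty := covSet_nonempty hB
  have ha0 : 0 ≤ a := le_csInf hne fun d hd => hd.1.le
  rcases eq_or_lt_of_le ha0 with hzero | hpos
  · -- a = 0 : take the empty set
    refine ⟨∅, Set.empty_subset B, Set.countable_empty, ?_⟩
    have h1 : covSet (∅ : Set M) = Set.Ioi (0 : ℝ) := by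
      ext d
      constructor
      · exact fun hd => hd.1
      · intro hd
        exact ⟨hd, ∅, by simp, by simp⟩
    rw [kuratowski_eq, h1, csInf_Ioi, ← hzero]
  · -- 0 < a
    have hstep : ∀ n : ℕ, ∃ C : Set M, C ⊆ B ∧ C.Countable ∧
        (a - a / (n + 2)) ∉ covSet C := by
      intro n
      have hdn_pos : 0 < a - a / (n + 2) := by
        have h2 : a / (n + 2) < a := by
          rw [div_lt_iff₀ (by positivity)]
          nlinarith
        linarith
      have hdn_lt : a - a / (n + 2) < a := by
        have : 0 < a / (n + 2) := by positivity
        linarith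
      have hnot : (a - a / (n + 2)) ∉ covSet B := by
        rw [ha, kuratowski_eq] at hdn_lt
        exact notMem_of_lt_csInf hdn_lt (covSet_bddBelow B)
      by_contra hcon
      push_neg at hcon
      apply hnot
      exact ⟨hdn_pos, reflect hdn_pos fun C hCB hCc => (hcon C hCB hCc).2⟩
    choose C hCB hCc hCnot using hstep
    refine ⟨⋃ n, C n, Set.iUnion_subset hCB, Set.countable_iUnion hCc, ?_⟩
    have hsub : (⋃ n, C n) ⊆ B := Set.iUnion_subset hCB
    have hne₀ : (covSet (⋃ n, C n)).Nonempty := hne.mono (covSet_anti hsub)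
    apply le_antisymm
    · exact csInf_le_csInf (covSet_bddBelow _) hne (covSet_anti hsub)
    · rw [kuratowski_eq]
      refine le_csInf hne₀ ?_
      intro d hd
      by_contra hda
      push_neg at hda
      obtain ⟨n, hn⟩ := exists_nat_gt (a / (a - d))
      have had : 0 < a - d := by linarith
      have hdn : d ≤ a - a / (n + 2) := by
        have h3 : a / (↑n + 2) < a - d := by
          rw [div_lt_iff₀ (by positivity)]
          have h4 : a / (a - d) * (a - d) < (↑n + 2) * (a - d) :=
            mul_lt_mul_of_pos_right (by linarith) had
          rw [div_mul_cancel₀ _ (ne_of_gt had)] at h4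
          linarith
        linarith
      have : (a - a / (n + 2)) ∈ covSet (C n) :=
        covSet_anti (Set.subset_iUnion C n) (covSet_upward hd hdn)
      exact hCnot n this
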